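/- Let 𝒜 be linear from Hermitian matrices to ℝ^m with the property that 𝒜(X) = 0 and X ⪰ 0 imply X = 0, let b ∈ ℝ^m, λ > 0, and define φ(X) = (1/2)‖𝒜(X) − b‖₂² + λ(Tr(X) − ‖X‖_F) on the PSD cone. Then φ is coercive on the PSD cone: φ(X) → ∞ as ‖X‖_F → ∞ with X ⪰ 0. -/

import Mathlib

open Matrix
open scoped ComplexOrder

noncomputable def frob {n : ℕ} (X : Matrix (Fin n) (Fin n) ℂ) : ℝ :=
  Real.sqrt ((Xᴴ * X).trace.re)

noncomputable def enorm {m : ℕ} (v : Fin m → ℝ) : ℝ :=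
  Real.sqrt (∑ i, (v i) ^ 2)

/-- Operator norm of a linear map `𝒜` restricted to Hermitian matrices,
with Frobenius norm on the source and Euclidean norm on the target. -/
noncomputable def opNormL {n m : ℕ}
    (𝒜 : Matrix (Fin n) (Fin n) ℂ →ₗ[ℝ] (Fin m → ℝ)) : ℝ :=
  sSup {t : ℝ | ∃ X : Matrix (Fin n) (Fin n) ℂ, X.IsHermitian ∧ X ≠ 0 ∧
    t = _root_.enorm (𝒜 X) / frob X}

noncomputable def phi {n m : ℕ} (𝒜 : Matrix (Fin n) (Fin n) ℂ →ₗ[ℝ] (Fin m → ℝ))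
    (b : Fin m → ℝ) (lam : ℝ) (X : Matrix (Fin n) (Fin n) ℂ) : ℝ :=
  (1 / 2) * (_root_.enorm (𝒜 X - b)) ^ 2 + lam * (X.trace.re - frob X)

/-! ### Auxiliary lemmas about `frob` -/

lemma trace_re_eq_sum {n : ℕ} (X : Matrix (Fin n) (Fin n) ℂ) :
    (Xᴴ * X).trace.re = ∑ i, ∑ j, ‖X i j‖ ^ 2 := by
  have h : ∀ z : ℂ, (star z * z).re = ‖z‖ ^ 2 := fun z => by
    rw [Complex.star_def, mul_comm, Complex.mul_conj, Complex.ofReal_re,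
      Complex.normSq_eq_norm_sq]
  simp only [Matrix.trace, Matrix.diag, Matrix.mul_apply, Matrix.conjTranspose_apply,
    Complex.re_sum]
  rw [Finset.sum_comm]
  exact Finset.sum_congr rfl fun i _ => Finset.sum_congr rfl fun j _ => h _

lemma frob_eq_sqrt_sum {n : ℕ} (X : Matrix (Fin n) (Fin n) ℂ) :
    frob X = Real.sqrt (∑ i, ∑ j, ‖X i j‖ ^ 2) := by
  unfold frob; rw [trace_re_eq_sum]

lemma frob_sq {n : ℕ} (X : Matrix (Fin n) (Fin n) ℂ) :
    frob X ^ 2 = (Xᴴ * X).trace.re := by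
  unfold frob
  rw [Real.sq_sqrt]
  rw [trace_re_eq_sum]
  exact Finset.sum_nonneg fun i _ => Finset.sum_nonneg fun j _ => sq_nonneg _

section frobLemmas

attribute [local instance] Matrix.frobeniusSeminormedAddCommGroup
  Matrix.frobeniusNormedAddCommGroup Matrix.frobeniusNormedSpace

lemma frob_eq_norm {n : ℕ} (X : Matrix (Fin n) (Fin n) ℂ) : frob X = ‖X‖ := by
  rw [frob_eq_sqrt_sum, Matrix.frobenius_norm_def, Real.sqrt_eq_rpow]
  congr 1
  congr 1
  ext i
  congr 1
  ext j
  rw [← Real.rpow_natCast ‖X i j‖ 2]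
  norm_num

lemma frob_nonneg {n : ℕ} (X : Matrix (Fin n) (Fin n) ℂ) : 0 ≤ frob X :=
  Real.sqrt_nonneg _

lemma frob_eq_zero_iff {n : ℕ} (X : Matrix (Fin n) (Fin n) ℂ) : frob X = 0 ↔ X = 0 := by
  rw [frob_eq_norm]; exact norm_eq_zero

lemma frob_smul {n : ℕ} (c : ℝ) (X : Matrix (Fin n) (Fin n) ℂ) :
    frob (c • X) = |c| * frob X := by
  rw [frob_eq_norm, frob_eq_norm, norm_smul, Real.norm_eq_abs]

lemma frob_mul_le {n : ℕ} (A B : Matrix (Fin n) (Fin n) ℂ) :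
    frob (A * B) ≤ frob A * frob B := by
  rw [frob_eq_norm, frob_eq_norm, frob_eq_norm]
  exact Matrix.frobenius_norm_mul A B

lemma frob_conjTranspose {n : ℕ} (A : Matrix (Fin n) (Fin n) ℂ) : frob Aᴴ = frob A := by
  rw [frob_eq_norm, frob_eq_norm]
  exact Matrix.frobenius_norm_conjTranspose A

end frobLemmas

/-! ### Auxiliary lemmas about `enorm` -/

lemma enorm_eq_norm {m : ℕ} (v : Fin m → ℝ) :
    _root_.enorm v = ‖(WithLp.equiv 2 (Fin m → ℝ)).symm v‖ := by
  rw [PiLp.norm_eq_of_L2]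
  unfold _root_.enorm
  congr 1
  congr 1
  ext i
  rw [WithLp.equiv_symm_apply, WithLp.ofLp_toLp, Real.norm_eq_abs, sq_abs]

lemma enorm_nonneg {m : ℕ} (v : Fin m → ℝ) : 0 ≤ _root_.enorm v := Real.sqrt_nonneg _

lemma enorm_eq_zero_iff {m : ℕ} (v : Fin m → ℝ) : _root_.enorm v = 0 ↔ v = 0 := by
  rw [enorm_eq_norm, norm_eq_zero]
  constructor
  · intro h; have := congrArg (WithLp.equiv 2 (Fin m → ℝ)) h; simpa using this
  · rintro rfl; simp

lemma enorm_smul' {m : ℕ} (c : ℝ) (v : Fin m → ℝ) : _root_.enorm (c • v) = |c| * _root_.enorm v := by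
  rw [enorm_eq_norm, enorm_eq_norm, ← Real.norm_eq_abs, ← norm_smul]
  congr 1

lemma enorm_sub_enorm_le {m : ℕ} (u v : Fin m → ℝ) : _root_.enorm u - _root_.enorm v ≤ _root_.enorm (u - v) := by
  rw [enorm_eq_norm, enorm_eq_norm, enorm_eq_norm]
  have : (WithLp.equiv 2 (Fin m → ℝ)).symm (u - v)
      = (WithLp.equiv 2 (Fin m → ℝ)).symm u - (WithLp.equiv 2 (Fin m → ℝ)).symm v := rfl
  rw [this]
  exact norm_sub_norm_le _ _

/-! ### PSD facts -/

lemma frob_le_trace {n : ℕ} {X : Matrix (Fin n) (Fin n) ℂ} (hX : X.PosSemidef) :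
    frob X ≤ X.trace.re := by
  obtain ⟨B, rfl⟩ : ∃ B : Matrix (Fin n) (Fin n) ℂ, X = Bᴴ * B := by
    open scoped MatrixOrder in
    obtain ⟨Y, hY, -, rfl⟩ := CFC.exists_sqrt_of_isSelfAdjoint_of_quasispectrumRestricts hX.1
      (QuasispectrumRestricts.nnreal_of_nonneg hX.nonneg)
    exact ⟨Y, by rw [show Yᴴ = Y from hY.star_eq]⟩
  calc frob (Bᴴ * B) ≤ frob Bᴴ * frob B := frob_mul_le _ _
    _ = frob B * frob B := by rw [frob_conjTranspose]
    _ = frob B ^ 2 := (sq (frob B)).symm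
    _ = (Bᴴ * B).trace.re := frob_sq B

lemma posSemidef_smul {n : ℕ} {X : Matrix (Fin n) (Fin n) ℂ} (hX : X.PosSemidef)
    {c : ℝ} (hc : 0 ≤ c) : (c • X).PosSemidef := by
  have hcX : c • X = (c : ℂ) • X := by
    ext i j
    simp [Complex.real_smul]
  rw [hcX]
  rw [Matrix.posSemidef_iff_dotProduct_mulVec]
  constructor
  · show ((c : ℂ) • X)ᴴ = (c : ℂ) • X
    rw [Matrix.conjTranspose_smul, hX.1.eq, Complex.star_def, Complex.conj_ofReal]
  · intro x
    rw [Matrix.smul_mulVec, dotProduct_smul]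
    rw [smul_eq_mul]
    exact mul_nonneg (by exact_mod_cast Complex.zero_le_real.mpr hc) (hX.dotProduct_mulVec_nonneg x)

/-! ### Topological facts -/

lemma continuous_frob {n : ℕ} : Continuous (fun X : Matrix (Fin n) (Fin n) ℂ => frob X) := by
  simp only [frob_eq_sqrt_sum]
  apply Real.continuous_sqrt.comp
  apply continuous_finset_sum
  intro i _
  apply continuous_finset_sum
  intro j _
  exact (((continuous_apply j).comp (continuous_apply i)).norm).pow 2

lemma continuous_enorm' {m : ℕ} : Continuous (fun v : Fin m → ℝ => _root_.enorm v) := by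
  unfold _root_.enorm
  apply Real.continuous_sqrt.comp
  apply continuous_finset_sum
  intro i _
  exact (continuous_apply i).pow 2

lemma isClosed_psd {n : ℕ} : IsClosed {X : Matrix (Fin n) (Fin n) ℂ | X.PosSemidef} := by
  have hcont : ∀ x : Fin n → ℂ,
      Continuous (fun X : Matrix (Fin n) (Fin n) ℂ => star x ⬝ᵥ X *ᵥ x) := by
    intro x
    simp only [dotProduct, mulVec]
    apply continuous_finset_sum
    intro i _
    apply Continuous.mul continuous_const
    apply continuous_finset_sum
    intro j _
    exact (continuous_id.matrix_elem i j).mul continuous_const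
  have h1 : IsClosed {X : Matrix (Fin n) (Fin n) ℂ | X.IsHermitian} := by
    have hct : Continuous (fun X : Matrix (Fin n) (Fin n) ℂ => Xᴴ) := by
      apply continuous_pi; intro i; apply continuous_pi; intro j
      exact Complex.continuous_conj.comp ((continuous_apply i).comp (continuous_apply j))
    exact isClosed_eq hct continuous_id
  have h2 : IsClosed {X : Matrix (Fin n) (Fin n) ℂ | ∀ x, 0 ≤ star x ⬝ᵥ X *ᵥ x} := by
    have : {X : Matrix (Fin n) (Fin n) ℂ | ∀ x, 0 ≤ star x ⬝ᵥ X *ᵥ x}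
        = ⋂ x : Fin n → ℂ, {X | 0 ≤ (star x ⬝ᵥ X *ᵥ x).re} ∩ {X | (star x ⬝ᵥ X *ᵥ x).im = 0} := by
      ext X
      simp only [Set.mem_setOf_eq, Set.mem_iInter, Set.mem_inter_iff]
      constructor
      · intro h x
        obtain ⟨h1, h2⟩ := Complex.le_def.mp (h x)
        exact ⟨by simpa using h1, by simpa using h2.symm⟩
      · intro h x
        exact Complex.le_def.mpr ⟨by simpa using (h x).1, by simpa using (h x).2.symm⟩
    rw [this]
    apply isClosed_iInter
    intro x
    exact ((isClosed_le continuous_const (Complex.continuous_re.comp (hcont x))).inter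
      (isClosed_eq (Complex.continuous_im.comp (hcont x)) continuous_const))
  have : {X : Matrix (Fin n) (Fin n) ℂ | X.PosSemidef}
      = {X : Matrix (Fin n) (Fin n) ℂ | X.IsHermitian}
        ∩ {X : Matrix (Fin n) (Fin n) ℂ | ∀ x, 0 ≤ star x ⬝ᵥ X *ᵥ x} := by
    ext X; exact Matrix.posSemidef_iff_dotProduct_mulVec
  rw [this]
  exact h1.inter h2

/-! ### The key uniform lower bound -/

lemma key_const {n m : ℕ} (𝒜 : Matrix (Fin n) (Fin n) ℂ →ₗ[ℝ] (Fin m → ℝ))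
    (hinj : ∀ X : Matrix (Fin n) (Fin n) ℂ, X.PosSemidef → 𝒜 X = 0 → X = 0) :
    ∃ c : ℝ, 0 < c ∧ ∀ X : Matrix (Fin n) (Fin n) ℂ, X.PosSemidef →
      c * frob X ≤ _root_.enorm (𝒜 X) := by
  rcases Nat.eq_zero_or_pos n with hn | hn
  · refine ⟨1, one_pos, fun X hX => ?_⟩
    subst hn
    have hX0 : X = 0 := Subsingleton.elim _ _
    subst hX0
    rw [map_zero]
    rw [(frob_eq_zero_iff (0 : Matrix (Fin 0) (Fin 0) ℂ)).mpr rfl,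
      (enorm_eq_zero_iff (0 : Fin m → ℝ)).mpr rfl]
    simp
  set S : Set (Matrix (Fin n) (Fin n) ℂ) := {X | X.PosSemidef ∧ frob X = 1} with hS
  have hsqrtn : (0 : ℝ) < Real.sqrt n := Real.sqrt_pos.mpr (by exact_mod_cast hn)
  have hne : S.Nonempty := by
    refine ⟨(Real.sqrt n)⁻¹ • (1 : Matrix (Fin n) (Fin n) ℂ),
      posSemidef_smul Matrix.PosSemidef.one (inv_nonneg.mpr hsqrtn.le), ?_⟩
    rw [frob_smul, abs_of_nonneg (inv_nonneg.mpr hsqrtn.le)]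
    have h1 : frob (1 : Matrix (Fin n) (Fin n) ℂ) = Real.sqrt n := by
      unfold frob
      congr 1
      simp [Matrix.trace]
    rw [h1, inv_mul_cancel₀ hsqrtn.ne']
  have hSc : IsCompact S := by
    have hclosed : IsClosed S := by
      have : S = {X : Matrix (Fin n) (Fin n) ℂ | X.PosSemidef} ∩ (frob ⁻¹' {1}) := rfl
      rw [this]
      exact isClosed_psd.inter (isClosed_singleton.preimage continuous_frob)
    letI : SeminormedAddCommGroup (Matrix (Fin n) (Fin n) ℂ) := Matrix.seminormedAddCommGroup
    letI : NormedAddCommGroup (Matrix (Fin n) (Fin n) ℂ) := Matrix.normedAddCommGroup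
    letI : NormedSpace ℝ (Matrix (Fin n) (Fin n) ℂ) := Matrix.normedSpace
    have hbdd : Bornology.IsBounded S := by
      rw [Metric.isBounded_iff_subset_closedBall 0]
      refine ⟨1, fun X hX => ?_⟩
      rw [Metric.mem_closedBall, dist_zero_right]
      have hsum : ∑ i, ∑ j, ‖X i j‖ ^ 2 = 1 := by
        have h := hX.2
        rw [frob_eq_sqrt_sum] at h
        have hnn : (0:ℝ) ≤ ∑ i, ∑ j, ‖X i j‖ ^ 2 :=
          Finset.sum_nonneg fun i _ => Finset.sum_nonneg fun j _ => sq_nonneg _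
        nlinarith [Real.sq_sqrt hnn]
      refine (pi_norm_le_iff_of_nonneg zero_le_one).mpr fun i => ?_
      refine (pi_norm_le_iff_of_nonneg zero_le_one).mpr fun j => ?_
      have h1 : ‖X i j‖ ^ 2 ≤ 1 := by
        rw [← hsum]
        have : ‖X i j‖ ^ 2 ≤ ∑ j', ‖X i j'‖ ^ 2 :=
          Finset.single_le_sum (f := fun j' => ‖X i j'‖ ^ 2)
            (fun j' _ => sq_nonneg _) (Finset.mem_univ j)
        refine this.trans (Finset.single_le_sum (f := fun i' => ∑ j', ‖X i' j'‖ ^ 2)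
          (fun i' _ => Finset.sum_nonneg fun j' _ => sq_nonneg _) (Finset.mem_univ i))
      nlinarith [norm_nonneg (X i j)]
    exact Metric.isCompact_of_isClosed_isBounded hclosed hbdd
  have hcont : Continuous (fun X : Matrix (Fin n) (Fin n) ℂ => _root_.enorm (𝒜 X)) :=
    continuous_enorm'.comp 𝒜.continuous_of_finiteDimensional
  obtain ⟨Y, hYS, hYmin⟩ := hSc.exists_isMinOn hne hcont.continuousOn
  rw [isMinOn_iff] at hYmin
  set c := _root_.enorm (𝒜 Y) with hc
  have hcpos : 0 < c := by
    rcases lt_or_eq_of_le (enorm_nonneg (𝒜 Y)) with h | h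
    · exact h
    · exfalso
      have h0 : 𝒜 Y = 0 := (enorm_eq_zero_iff _).mp h.symm
      have hY0 : Y = 0 := hinj Y hYS.1 h0
      have := hYS.2
      rw [hY0, (frob_eq_zero_iff _).mpr rfl] at this
      norm_num at this
  refine ⟨c, hcpos, fun X hX => ?_⟩
  rcases eq_or_lt_of_le (frob_nonneg X) with h0 | h0
  · rw [← h0, mul_zero]
    exact enorm_nonneg _
  · set r := frob X with hr
    have hY' : (r⁻¹ • X) ∈ S := by
      constructor
      · exact posSemidef_smul hX (inv_nonneg.mpr h0.le)
      · rw [frob_smul, abs_of_nonneg (inv_nonneg.mpr h0.le), inv_mul_cancel₀ h0.ne']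
    have h1 : c ≤ _root_.enorm (𝒜 (r⁻¹ • X)) := hYmin _ hY'
    rw [_root_.map_smul, enorm_smul', abs_of_nonneg (inv_nonneg.mpr h0.le)] at h1
    calc c * r ≤ (r⁻¹ * _root_.enorm (𝒜 X)) * r := by
          exact mul_le_mul_of_nonneg_right h1 h0.le
      _ = _root_.enorm (𝒜 X) := by field_simp

theorem stmt_16 {n m : ℕ}
    (𝒜 : Matrix (Fin n) (Fin n) ℂ →ₗ[ℝ] (Fin m → ℝ))
    (hinj : ∀ X : Matrix (Fin n) (Fin n) ℂ, X.PosSemidef → 𝒜 X = 0 → X = 0)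
    (b : Fin m → ℝ) (lam : ℝ) (hlam : 0 < lam) :
    ∀ M : ℝ, ∃ R : ℝ, ∀ X : Matrix (Fin n) (Fin n) ℂ, X.PosSemidef →
      R ≤ frob X → M ≤ phi 𝒜 b lam X := by
  intro M
  obtain ⟨c, hcpos, hkey⟩ := key_const 𝒜 hinj
  refine ⟨(_root_.enorm b + Real.sqrt (2 * |M|) + 1) / c, fun X hX hR => ?_⟩
  rw [div_le_iff₀ hcpos] at hR
  have h1 : _root_.enorm b + Real.sqrt (2 * |M|) + 1 ≤ c * frob X := by linarith [hR]
  have h2 : Real.sqrt (2 * |M|) + 1 ≤ _root_.enorm (𝒜 X - b) := by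
    have ht := enorm_sub_enorm_le (𝒜 X) b
    have hk := hkey X hX
    linarith
  have h4 : 2 * |M| ≤ _root_.enorm (𝒜 X - b) ^ 2 := by
    have hs := Real.sq_sqrt (by positivity : (0:ℝ) ≤ 2 * |M|)
    nlinarith [Real.sqrt_nonneg (2 * |M|), enorm_nonneg (𝒜 X - b)]
  have h5 : 0 ≤ lam * (X.trace.re - frob X) :=
    mul_nonneg hlam.le (sub_nonneg.mpr (frob_le_trace hX))
  have hM : M ≤ |M| := le_abs_self M
  unfold phi
  linarith
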